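/- Young–Lóeve estimate: if x has finite p-variation and y has finite q-variation on [0,1] with 1/p + 1/q > 1, then for all s ≤ t, |∫_s^t x_r dy_r − x_s(y_t − y_s)| ≤ C_{p,q} ‖x‖_{p-var,[s,t]} ‖y‖_{q-var,[s,t]}, where C_{p,q} depends only on p and q (e.g. C_{p,q} = ζ(1/p + 1/q) with ζ the Riemann zeta function). -/

import Mathlib

/-- `t` is a finite partition `a = t₀ ≤ t₁ ≤ ⋯ ≤ tₙ = b` of `[a,b]`. -/
def IsPartitionOn (a b : ℝ) (n : ℕ) (t : ℕ → ℝ) : Prop :=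
  1 ≤ n ∧ t 0 = a ∧ t n = b ∧ ∀ k < n, t k ≤ t (k + 1)

/-- The `p`-variation sum of `x` over a partition. -/
noncomputable def varSum (x : ℝ → ℝ) (p : ℝ) (n : ℕ) (t : ℕ → ℝ) : ℝ :=
  ∑ k ∈ Finset.range n, |x (t (k + 1)) - x (t k)| ^ p

/-- Finite `p`-variation on `[a,b]`. -/
def FiniteVarOn (x : ℝ → ℝ) (p a b : ℝ) : Prop :=
  ∃ M : ℝ, ∀ n t, IsPartitionOn a b n t → varSum x p n t ≤ M

/-- The `p`-variation norm `‖x‖_{p-var,[a,b]} = sup_D (Σ_k |Δx|^p)^{1/p}`. -/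
noncomputable def pVarNorm (x : ℝ → ℝ) (p a b : ℝ) : ℝ :=
  sSup {r : ℝ | ∃ n t, IsPartitionOn a b n t ∧ r = varSum x p n t ^ (1 / p)}

/-- `I` is the Young integral `∫_a^b x dy`, i.e. the mesh-limit of
Riemann–Stieltjes sums. -/
def IsYoungIntegral (x y : ℝ → ℝ) (a b I : ℝ) : Prop :=
  ∀ ε > 0, ∃ δ > 0, ∀ n t, IsPartitionOn a b n t →
    (∀ k < n, t (k + 1) - t k < δ) →
    |(∑ k ∈ Finset.range n, x (t k) * (y (t (k + 1)) - y (t k))) - I| < ε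

lemma exists_small_prod (p q : ℝ) (hp : 1 ≤ p) (hq : 1 ≤ q)
    (m : ℕ) (hm : 0 < m) (a b : ℕ → ℝ) (ha : ∀ i, 0 ≤ a i) (hb : ∀ i, 0 ≤ b i)
    (A B : ℝ) (hA0 : 0 ≤ A) (hB0 : 0 ≤ B)
    (hA : ∑ i ∈ Finset.range m, a i ^ p ≤ A ^ p)
    (hB : ∑ i ∈ Finset.range m, b i ^ q ≤ B ^ q) :
    ∃ i < m, a i * b i ≤ (m : ℝ) ^ (-(1/p + 1/q)) * (A * B) := by
  have hp0 : 0 < p := lt_of_lt_of_le one_pos hp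
  have hq0 : 0 < q := lt_of_lt_of_le one_pos hq
  have hm0 : (0:ℝ) < (m:ℝ) := by exact_mod_cast hm
  have hmr : (0:ℝ) ≤ (m:ℝ) ^ (-(1/p + 1/q)) := Real.rpow_nonneg hm0.le _
  -- degenerate cases
  rcases eq_or_lt_of_le hA0 with hA0' | hApos
  · refine ⟨0, hm, ?_⟩
    have h1 : a 0 ^ p ≤ 0 := by
      have h2 := Finset.single_le_sum (f := fun i => a i ^ p)
        (fun i _ => Real.rpow_nonneg (ha i) p) (Finset.mem_range.mpr hm)
      have : A ^ p = 0 := by rw [← hA0', Real.zero_rpow (ne_of_gt hp0)]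
      linarith
    have ha0 : a 0 = 0 := by
      by_contra h
      have h3 : 0 < a 0 := lt_of_le_of_ne (ha 0) (Ne.symm h)
      exact absurd (Real.rpow_pos_of_pos h3 p) (not_lt.mpr h1)
    rw [ha0, zero_mul, ← hA0', zero_mul, mul_zero]
  rcases eq_or_lt_of_le hB0 with hB0' | hBpos
  · refine ⟨0, hm, ?_⟩
    have h1 : b 0 ^ q ≤ 0 := by
      have h2 := Finset.single_le_sum (f := fun i => b i ^ q)
        (fun i _ => Real.rpow_nonneg (hb i) q) (Finset.mem_range.mpr hm)
      have : B ^ q = 0 := by rw [← hB0', Real.zero_rpow (ne_of_gt hq0)]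
      linarith
    have hb0 : b 0 = 0 := by
      by_contra h
      have h3 : 0 < b 0 := lt_of_le_of_ne (hb 0) (Ne.symm h)
      exact absurd (Real.rpow_pos_of_pos h3 q) (not_lt.mpr h1)
    rw [hb0, mul_zero, ← hB0', mul_zero, mul_zero]
  -- main case
  set r : ℝ := 1/p + 1/q with hr
  have hrpos : 0 < r := by positivity
  set θ : ℝ := r⁻¹ with hθ
  have hθpos : 0 < θ := inv_pos.mpr hrpos
  have hw : θ/p + θ/q = 1 := by
    field_simp [hθ, hr]
    have h : θ * r = 1 := by rw [hθ]; exact inv_mul_cancel₀ (ne_of_gt hrpos)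
    rw [hr] at h
    field_simp at h
    linarith
  set f : ℕ → ℝ := fun i => ((a i / A) * (b i / B)) ^ θ with hf
  have hfsum : ∑ i ∈ Finset.range m, f i ≤ 1 := by
    have hterm : ∀ i, f i ≤ (θ/p) * (a i / A) ^ p + (θ/q) * (b i / B) ^ q := by
      intro i
      have h1 : f i = ((a i / A) ^ p) ^ (θ/p) * ((b i / B) ^ q) ^ (θ/q) := by
        show ((a i / A) * (b i / B)) ^ θ = _
        have hu : (0:ℝ) ≤ a i / A := div_nonneg (ha i) hA0
        have hv : (0:ℝ) ≤ b i / B := div_nonneg (hb i) hB0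
        rw [Real.mul_rpow hu hv, ← Real.rpow_mul hu, ← Real.rpow_mul hv,
          mul_div_cancel₀ θ (ne_of_gt hp0), mul_div_cancel₀ θ (ne_of_gt hq0)]
      rw [h1]
      exact Real.geom_mean_le_arith_mean2_weighted
        (by positivity) (by positivity)
        (Real.rpow_nonneg (div_nonneg (ha i) hA0) p)
        (Real.rpow_nonneg (div_nonneg (hb i) hB0) q) hw
    calc ∑ i ∈ Finset.range m, f i
        ≤ ∑ i ∈ Finset.range m, ((θ/p) * (a i / A) ^ p + (θ/q) * (b i / B) ^ q) :=
          Finset.sum_le_sum fun i _ => hterm i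
      _ = (θ/p) * ∑ i ∈ Finset.range m, (a i / A) ^ p
          + (θ/q) * ∑ i ∈ Finset.range m, (b i / B) ^ q := by
          rw [Finset.sum_add_distrib, Finset.mul_sum, Finset.mul_sum]
      _ ≤ (θ/p) * 1 + (θ/q) * 1 := by
          have hAp : (0:ℝ) < A ^ p := Real.rpow_pos_of_pos hApos p
          have hBq : (0:ℝ) < B ^ q := Real.rpow_pos_of_pos hBpos q
          have e1 : ∑ i ∈ Finset.range m, (a i / A) ^ p ≤ 1 := by
            have : ∑ i ∈ Finset.range m, (a i / A) ^ p
                = (∑ i ∈ Finset.range m, a i ^ p) / A ^ p := by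
              rw [Finset.sum_div]
              exact Finset.sum_congr rfl fun i _ => Real.div_rpow (ha i) hA0 p
            rw [this]
            exact (div_le_one hAp).mpr hA
          have e2 : ∑ i ∈ Finset.range m, (b i / B) ^ q ≤ 1 := by
            have : ∑ i ∈ Finset.range m, (b i / B) ^ q
                = (∑ i ∈ Finset.range m, b i ^ q) / B ^ q := by
              rw [Finset.sum_div]
              exact Finset.sum_congr rfl fun i _ => Real.div_rpow (hb i) hB0 q
            rw [this]
            exact (div_le_one hBq).mpr hB
          have h1 : 0 ≤ θ/p := by positivity
          have h2 : 0 ≤ θ/q := by positivity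
          exact add_le_add (mul_le_mul_of_nonneg_left e1 h1) (mul_le_mul_of_nonneg_left e2 h2)
      _ = 1 := by rw [mul_one, mul_one]; exact hw
  have hex : ∃ i ∈ Finset.range m, f i ≤ (m:ℝ)⁻¹ := by
    apply Finset.exists_le_of_sum_le (Finset.nonempty_range_iff.mpr (Nat.pos_iff_ne_zero.mp hm))
    · rw [Finset.sum_const, Finset.card_range, nsmul_eq_mul, mul_inv_cancel₀ (ne_of_gt hm0)]
      exact hfsum
  obtain ⟨i, hi, hfi⟩ := hex
  refine ⟨i, Finset.mem_range.mp hi, ?_⟩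
  have hu : (0:ℝ) ≤ (a i / A) * (b i / B) :=
    mul_nonneg (div_nonneg (ha i) hA0) (div_nonneg (hb i) hB0)
  have key : (a i / A) * (b i / B) ≤ (m:ℝ) ^ (-r) := by
    have h1 : (f i) ^ r ≤ ((m:ℝ)⁻¹) ^ r :=
      Real.rpow_le_rpow (Real.rpow_nonneg hu θ) hfi hrpos.le
    have h2 : (f i) ^ r = (a i / A) * (b i / B) := by
      rw [hf, ← Real.rpow_mul hu, hθ, inv_mul_cancel₀ (ne_of_gt hrpos), Real.rpow_one]
    have h3 : ((m:ℝ)⁻¹) ^ r = (m:ℝ) ^ (-r) := by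
      rw [Real.inv_rpow hm0.le, Real.rpow_neg hm0.le]
    rw [h2, h3] at h1
    exact h1
  have hAB : (0:ℝ) < A * B := mul_pos hApos hBpos
  have : (a i * b i) / (A * B) ≤ (m:ℝ) ^ (-r) := by
    have : (a i / A) * (b i / B) = (a i * b i) / (A * B) := by
      field_simp
    linarith [key, this ▸ key]
  calc a i * b i = ((a i * b i) / (A * B)) * (A * B) := by field_simp
    _ ≤ (m:ℝ) ^ (-r) * (A * B) := mul_le_mul_of_nonneg_right this hAB.le

lemma remove_point (x y : ℝ → ℝ) (s tt : ℝ) (n i : ℕ) (t t' : ℕ → ℝ)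
    (ht : IsPartitionOn s tt n t) (hn : 2 ≤ n) (hi : i < n - 1)
    (ht' : ∀ j, t' j = if j ≤ i then t j else t (j + 1)) :
    IsPartitionOn s tt (n - 1) t' ∧
    (∑ k ∈ Finset.range n, x (t k) * (y (t (k + 1)) - y (t k)))
      - (∑ k ∈ Finset.range (n - 1), x (t' k) * (y (t' (k + 1)) - y (t' k)))
      = (x (t (i + 1)) - x (t i)) * (y (t (i + 2)) - y (t (i + 1))) := by
  obtain ⟨hn1, h0, hN, hmono⟩ := ht
  constructor
  · refine ⟨by omega, by rw [ht' 0, if_pos (Nat.zero_le i)]; exact h0, ?_, ?_⟩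
    · rw [ht' (n-1), if_neg (by omega), show n - 1 + 1 = n from by omega]; exact hN
    · intro j hj
      rw [ht' j, ht' (j+1)]
      rcases lt_trichotomy j i with h | h | h
      · rw [if_pos h.le, if_pos (by omega)]; exact hmono j (by omega)
      · subst h
        rw [if_pos le_rfl, if_neg (by omega)]
        exact le_trans (hmono j (by omega)) (hmono (j+1) (by omega))
      · rw [if_neg (by omega), if_neg (by omega)]; exact hmono (j+1) (by omega)
  · set f : ℕ → ℝ := fun k => x (t k) * (y (t (k + 1)) - y (t k)) with hfdef
    set h : ℕ → ℝ := fun k => x (t' k) * (y (t' (k + 1)) - y (t' k)) with hhdef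
    have hf1 : ∑ k ∈ Finset.range n, f k
        = ∑ k ∈ Finset.range i, f k + f i + f (i+1) + ∑ k ∈ Finset.Ico (i+2) n, f k := by
      have e1 : ∑ k ∈ Finset.range (i+2), f k + ∑ k ∈ Finset.Ico (i+2) n, f k
          = ∑ k ∈ Finset.range n, f k := Finset.sum_range_add_sum_Ico f (by omega)
      rw [← e1, Finset.sum_range_succ, Finset.sum_range_succ]
    have hh1 : ∑ k ∈ Finset.range (n-1), h k
        = ∑ k ∈ Finset.range i, f k + x (t i) * (y (t (i+2)) - y (t i))
          + ∑ k ∈ Finset.Ico (i+2) n, f k := by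
      have e1 : ∑ k ∈ Finset.range (i+1), h k + ∑ k ∈ Finset.Ico (i+1) (n-1), h k
          = ∑ k ∈ Finset.range (n-1), h k := Finset.sum_range_add_sum_Ico h (by omega)
      have e2 : ∑ k ∈ Finset.range i, h k = ∑ k ∈ Finset.range i, f k := by
        refine Finset.sum_congr rfl fun k hk => ?_
        have hk' := Finset.mem_range.mp hk
        simp only [hhdef, hfdef, ht' k, ht' (k+1), if_pos hk'.le, if_pos (by omega : k+1 ≤ i)]
      have e3 : h i = x (t i) * (y (t (i+2)) - y (t i)) := by
        simp only [hhdef, ht' i, ht' (i+1), if_pos le_rfl, if_neg (by omega : ¬ i+1 ≤ i)]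
      have e4 : ∑ k ∈ Finset.Ico (i+1) (n-1), h k = ∑ k ∈ Finset.Ico (i+2) n, f k := by
        rw [Finset.sum_Ico_eq_sum_range, Finset.sum_Ico_eq_sum_range]
        rw [show n - 1 - (i+1) = n - (i+2) from by omega]
        refine Finset.sum_congr rfl fun k _ => ?_
        simp only [hhdef, hfdef, ht' (i+1+k), ht' (i+1+k+1),
          if_neg (by omega : ¬ i+1+k ≤ i), if_neg (by omega : ¬ i+1+k+1 ≤ i)]
        rw [show i+1+k+1 = i+2+k from by omega]
      rw [← e1, Finset.sum_range_succ, e2, e3, e4]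
    rw [hf1, hh1]; ring

lemma rs_bound (p q : ℝ) (hp : 1 ≤ p) (hq : 1 ≤ q) (x y : ℝ → ℝ) (s tt A B : ℝ)
    (hA0 : 0 ≤ A) (hB0 : 0 ≤ B)
    (hA : ∀ n t, IsPartitionOn s tt n t → varSum x p n t ≤ A ^ p)
    (hB : ∀ n t, IsPartitionOn s tt n t → varSum y q n t ≤ B ^ q) :
    ∀ n t, IsPartitionOn s tt n t →
      |(∑ k ∈ Finset.range n, x (t k) * (y (t (k + 1)) - y (t k))) - x s * (y tt - y s)|
        ≤ (∑ j ∈ Finset.range (n - 1), ((j : ℝ) + 1) ^ (-(1/p + 1/q))) * (A * B) := by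
  intro n
  induction n using Nat.strong_induction_on with
  | _ n IH =>
    intro t ht
    obtain ⟨hn1, h0, hN, hmono⟩ := ht
    rcases lt_or_ge n 2 with hn2 | hn2
    · -- n = 1
      have hn : n = 1 := by omega
      subst hn
      simp only [Finset.sum_range_one, h0]
      rw [show (1:ℕ) - 1 = 0 from rfl, Finset.sum_range_zero, zero_mul]
      rw [show t 1 = tt from hN]
      simp
    · -- n ≥ 2
      set a : ℕ → ℝ := fun i => |x (t (i + 1)) - x (t i)| with hadef
      set b : ℕ → ℝ := fun i => |y (t (i + 2)) - y (t (i + 1))| with hbdef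
      have hA' : ∑ i ∈ Finset.range (n - 1), a i ^ p ≤ A ^ p := by
        refine le_trans ?_ (hA n t ⟨hn1, h0, hN, hmono⟩)
        unfold varSum
        refine Finset.sum_le_sum_of_subset_of_nonneg
          (Finset.range_subset_range.mpr (by omega)) fun i _ _ => ?_
        exact Real.rpow_nonneg (abs_nonneg _) p
      have hB' : ∑ i ∈ Finset.range (n - 1), b i ^ q ≤ B ^ q := by
        refine le_trans ?_ (hB n t ⟨hn1, h0, hN, hmono⟩)
        unfold varSum
        have e : ∑ k ∈ Finset.range n, |y (t (k + 1)) - y (t k)| ^ q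
            = ∑ i ∈ Finset.range (n - 1), |y (t (i + 1 + 1)) - y (t (i + 1))| ^ q
              + |y (t 1) - y (t 0)| ^ q := by
          rw [show n = (n - 1) + 1 from by omega, Finset.sum_range_succ']
          norm_num
        rw [e]
        have : ∑ i ∈ Finset.range (n - 1), b i ^ q
            = ∑ i ∈ Finset.range (n - 1), |y (t (i + 1 + 1)) - y (t (i + 1))| ^ q := by
          refine Finset.sum_congr rfl fun i _ => ?_
          simp only [hbdef]
        rw [this]
        have := Real.rpow_nonneg (abs_nonneg (y (t 1) - y (t 0))) q
        linarith
      obtain ⟨i, hi, hsmall⟩ := exists_small_prod p q hp hq (n - 1) (by omega) a b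
        (fun i => abs_nonneg _) (fun i => abs_nonneg _) A B hA0 hB0 hA' hB'
      set t' : ℕ → ℝ := fun j => if j ≤ i then t j else t (j + 1) with ht'def
      obtain ⟨hpart', hdiff⟩ := remove_point x y s tt n i t t' ⟨hn1, h0, hN, hmono⟩ hn2 hi
        (fun j => rfl)
      have hIH := IH (n - 1) (by omega) t' hpart'
      have habs : |(∑ k ∈ Finset.range n, x (t k) * (y (t (k + 1)) - y (t k)))
          - (∑ k ∈ Finset.range (n - 1), x (t' k) * (y (t' (k + 1)) - y (t' k)))|
          = a i * b i := by
        rw [hdiff, abs_mul]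
      have tri : |(∑ k ∈ Finset.range n, x (t k) * (y (t (k + 1)) - y (t k))) - x s * (y tt - y s)|
          ≤ a i * b i
            + (∑ j ∈ Finset.range (n - 1 - 1), ((j : ℝ) + 1) ^ (-(1/p + 1/q))) * (A * B) := by
        calc |(∑ k ∈ Finset.range n, x (t k) * (y (t (k + 1)) - y (t k))) - x s * (y tt - y s)|
            ≤ |(∑ k ∈ Finset.range n, x (t k) * (y (t (k + 1)) - y (t k)))
                - (∑ k ∈ Finset.range (n - 1), x (t' k) * (y (t' (k + 1)) - y (t' k)))|
              + |(∑ k ∈ Finset.range (n - 1), x (t' k) * (y (t' (k + 1)) - y (t' k)))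
                - x s * (y tt - y s)| := abs_sub_le _ _ _
          _ ≤ _ := by rw [habs]; exact add_le_add_right hIH _
      have hcast : ((n - 1 : ℕ) : ℝ) = ((n - 2 : ℕ) : ℝ) + 1 := by
        push_cast [show n - 1 = (n - 2) + 1 from by omega]
        ring
      have hstep : a i * b i ≤ (((n - 2 : ℕ) : ℝ) + 1) ^ (-(1/p + 1/q)) * (A * B) := by
        rw [← hcast]; exact hsmall
      have hsum : ∑ j ∈ Finset.range (n - 1), ((j : ℝ) + 1) ^ (-(1/p + 1/q))
          = ∑ j ∈ Finset.range (n - 2), ((j : ℝ) + 1) ^ (-(1/p + 1/q))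
            + (((n - 2 : ℕ) : ℝ) + 1) ^ (-(1/p + 1/q)) := by
        rw [show n - 1 = (n - 2) + 1 from by omega, Finset.sum_range_succ]
      rw [hsum, add_mul, show n - 1 - 1 = n - 2 from by omega] at *
      linarith

lemma varSum_nonneg (x : ℝ → ℝ) (p : ℝ) (n : ℕ) (t : ℕ → ℝ) : 0 ≤ varSum x p n t :=
  Finset.sum_nonneg fun i _ => Real.rpow_nonneg (abs_nonneg _) p

lemma pVarNorm_bounds (x : ℝ → ℝ) (p : ℝ) (hp : 1 ≤ p) (s t : ℝ)
    (hs : 0 ≤ s) (hst : s ≤ t) (ht : t ≤ 1) (hfin : FiniteVarOn x p 0 1) :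
    0 ≤ pVarNorm x p s t ∧
      ∀ n u, IsPartitionOn s t n u → varSum x p n u ≤ (pVarNorm x p s t) ^ p := by
  have hp0 : 0 < p := lt_of_lt_of_le one_pos hp
  obtain ⟨M, hM⟩ := hfin
  set S := {r : ℝ | ∃ n u, IsPartitionOn s t n u ∧ r = varSum x p n u ^ (1 / p)} with hS
  -- every partition of [s,t] has varSum ≤ max M 0
  have hext : ∀ n u, IsPartitionOn s t n u → varSum x p n u ≤ max M 0 := by
    intro n u hu
    obtain ⟨hn1, hu0, hun, humono⟩ := hu
    set v : ℕ → ℝ := fun j => if j = 0 then 0 else if j ≤ n + 1 then u (j - 1) else 1 with hv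
    have hvpart : IsPartitionOn 0 1 (n + 2) v := by
      refine ⟨by omega, by simp [hv], ?_, ?_⟩
      · simp only [hv]
        rw [if_neg (by omega), if_neg (by omega)]
      · intro k hk
        simp only [hv]
        rcases Nat.eq_zero_or_pos k with hk0 | hk0
        · subst hk0
          rw [if_pos rfl, if_neg (by omega), if_pos (by omega)]
          simpa [hu0] using hs
        · rw [if_neg (by omega)]
          rcases lt_or_ge k (n + 1) with hk1 | hk1
          · rw [if_pos (by omega), if_neg (by omega), if_pos (by omega)]
            have h' := humono (k - 1) (by omega)
            rwa [show k - 1 + 1 = k + 1 - 1 from by omega] at h'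
          · have hkn : k = n + 1 := by omega
            subst hkn
            rw [if_pos (by omega), if_neg (by omega), if_neg (by omega)]
            rw [show n + 1 - 1 = n from by omega, hun]
            exact ht
    have hle : varSum x p n u ≤ varSum x p (n + 2) v := by
      unfold varSum
      have e1 : ∑ k ∈ Finset.range n, |x (u (k + 1)) - x (u k)| ^ p
          = ∑ j ∈ Finset.Ico 1 (n + 1), |x (v (j + 1)) - x (v j)| ^ p := by
        rw [Finset.sum_Ico_eq_sum_range]
        refine Finset.sum_congr (by norm_num) fun k hk => ?_
        have hk' := Finset.mem_range.mp hk
        simp only [hv]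
        rw [if_neg (by omega), if_pos (by omega), if_neg (by omega), if_pos (by omega),
          show 1 + k + 1 - 1 = k + 1 from by omega, show 1 + k - 1 = k from by omega]
      rw [e1]
      refine Finset.sum_le_sum_of_subset_of_nonneg ?_ fun i _ _ => Real.rpow_nonneg (abs_nonneg _) p
      intro j hj
      simp only [Finset.mem_Ico, Finset.mem_range] at *
      omega
    exact le_trans hle (le_trans (hM (n + 2) v hvpart) (le_max_left M 0))
  have hbdd : BddAbove S := by
    refine ⟨(max M 0) ^ (1 / p), fun r hr => ?_⟩
    obtain ⟨n, u, hu, rfl⟩ := hr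
    exact Real.rpow_le_rpow (varSum_nonneg x p n u) (hext n u hu) (by positivity)
  have hmem : ∀ n u, IsPartitionOn s t n u → varSum x p n u ^ (1 / p) ∈ S :=
    fun n u hu => ⟨n, u, hu, rfl⟩
  have htriv : IsPartitionOn s t 1 (fun k => if k = 0 then s else t) := by
    refine ⟨le_rfl, by simp, by norm_num, ?_⟩
    intro k hk
    have : k = 0 := by omega
    subst this
    simpa using hst
  have h0 : 0 ≤ pVarNorm x p s t := by
    exact le_trans (Real.rpow_nonneg (varSum_nonneg x p 1 (fun k => if k = 0 then s else t)) (1 / p))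
      (le_csSup hbdd (hmem 1 (fun k => if k = 0 then s else t) htriv))
  refine ⟨h0, fun n u hu => ?_⟩
  have h1 : varSum x p n u ^ (1 / p) ≤ pVarNorm x p s t := le_csSup hbdd (hmem n u hu)
  have h2 : (varSum x p n u ^ (1 / p)) ^ p ≤ (pVarNorm x p s t) ^ p :=
    Real.rpow_le_rpow (Real.rpow_nonneg (varSum_nonneg x p n u) _) h1 hp0.le
  rwa [← Real.rpow_mul (varSum_nonneg x p n u), one_div,
    inv_mul_cancel₀ (ne_of_gt hp0), Real.rpow_one] at h2

/-- Young–Lóeve estimate: there is a constant `C` depending only on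
`p, q` such that for continuous `x` of finite `p`-variation and `y` of finite
`q`-variation with `1/p + 1/q > 1`, for all `0 ≤ s ≤ t ≤ 1`,
`|∫_s^t x dy − x_s(y_t − y_s)| ≤ C ‖x‖_{p-var,[s,t]} ‖y‖_{q-var,[s,t]}`. -/
theorem young_loeve_estimate (p q : ℝ) (hp : 1 ≤ p) (hq : 1 ≤ q)
    (hpq : 1 / p + 1 / q > 1) :
    ∃ C : ℝ, ∀ x y : ℝ → ℝ,
      ContinuousOn x (Set.Icc 0 1) → ContinuousOn y (Set.Icc 0 1) →
      FiniteVarOn x p 0 1 → FiniteVarOn y q 0 1 →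
      ∀ s t : ℝ, 0 ≤ s → s ≤ t → t ≤ 1 → ∀ I : ℝ, IsYoungIntegral x y s t I →
        |I - x s * (y t - y s)| ≤ C * pVarNorm x p s t * pVarNorm y q s t := by
  have hsummable : Summable (fun j : ℕ => ((j : ℝ) + 1) ^ (-(1/p + 1/q))) := by
    have h1 : Summable (fun n : ℕ => 1 / (n : ℝ) ^ (1/p + 1/q)) :=
      Real.summable_one_div_nat_rpow.mpr hpq
    have h2 := (summable_nat_add_iff 1).mpr h1
    refine h2.congr fun j => ?_
    have hj : (0:ℝ) < (j : ℝ) + 1 := by positivity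
    rw [Real.rpow_neg hj.le]
    push_cast
    rw [one_div]
  set C : ℝ := ∑' j : ℕ, ((j : ℝ) + 1) ^ (-(1/p + 1/q)) with hC
  refine ⟨C, fun x y hxc hyc hfx hfy s t hs hst ht1 I hI => ?_⟩
  obtain ⟨hA0, hA⟩ := pVarNorm_bounds x p hp s t hs hst ht1 hfx
  obtain ⟨hB0, hB⟩ := pVarNorm_bounds y q hq s t hs hst ht1 hfy
  set A := pVarNorm x p s t with hAdef
  set B := pVarNorm y q s t with hBdef
  have key : ∀ n u, IsPartitionOn s t n u →
      |(∑ k ∈ Finset.range n, x (u k) * (y (u (k + 1)) - y (u k))) - x s * (y t - y s)|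
        ≤ C * (A * B) := by
    intro n u hu
    refine le_trans (rs_bound p q hp hq x y s t A B hA0 hB0 hA hB n u hu) ?_
    refine mul_le_mul_of_nonneg_right ?_ (mul_nonneg hA0 hB0)
    exact Summable.sum_le_tsum _ (fun j _ => Real.rpow_nonneg (by positivity) _) hsummable
  rw [mul_assoc]
  refine le_of_forall_pos_le_add fun ε hε => ?_
  obtain ⟨δ, hδ, hδ'⟩ := hI ε hε
  obtain ⟨N, hNpos, hNgt⟩ : ∃ N : ℕ, 0 < N ∧ (t - s) / δ < N := by
    obtain ⟨n, hn⟩ := exists_nat_gt ((t - s) / δ)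
    exact ⟨n + 1, Nat.succ_pos n,
      lt_of_lt_of_le hn (by exact_mod_cast Nat.le_succ n)⟩
  have hN0 : (0:ℝ) < (N : ℝ) := by exact_mod_cast hNpos
  set u : ℕ → ℝ := fun k => s + (k : ℝ) * ((t - s) / N) with hu
  have hts : 0 ≤ t - s := sub_nonneg.mpr hst
  have hd0 : (0:ℝ) ≤ (t - s) / N := by positivity
  have hupart : IsPartitionOn s t N u := by
    refine ⟨hNpos, by simp [hu], ?_, ?_⟩
    · simp only [hu]
      field_simp
      ring
    · intro k hk
      simp only [hu]
      push_cast
      nlinarith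
  have hmesh : ∀ k < N, u (k + 1) - u k < δ := by
    intro k hk
    simp only [hu]
    push_cast
    have e : s + ((k:ℝ) + 1) * ((t - s) / N) - (s + (k:ℝ) * ((t - s) / N))
        = (t - s) / N := by ring
    rw [e, div_lt_iff₀ hN0]
    calc t - s = ((t - s) / δ) * δ := by field_simp
      _ < (N : ℝ) * δ := mul_lt_mul_of_pos_right hNgt hδ
      _ = δ * (N : ℝ) := by ring
  have h1 := hδ' N u hupart hmesh
  have h2 := key N u hupart
  set RS := ∑ k ∈ Finset.range N, x (u k) * (y (u (k + 1)) - y (u k)) with hRS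
  calc |I - x s * (y t - y s)| ≤ |RS - I| + |RS - x s * (y t - y s)| := by
        have := abs_sub_le (I) (RS) (x s * (y t - y s))
        rw [abs_sub_comm I RS] at this
        exact this
    _ ≤ ε + C * (A * B) := add_le_add h1.le h2
    _ = C * (A * B) + ε := by ring
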